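/- Let S be a left-cancellative left-amenable semigroup, F = (F_j)_{j∈J} a Følner net for S, and A a finite set with |A| ≥ 2. Suppose X ⊆ A^S is such that there exist a non-empty finite subset K ⊆ S and a K-tiling T of S with π_{Kt}(X) a proper subset of A^{Kt} for every t ∈ T. Then ent_F(X) < log|A|. -/

import Mathlib

/-- The entropy of a set of configurations `X ⊆ A^S` with respect to the net `F`:
`ent F X = limsup_j log|π_{F_j}(X)| / |F_j|`. -/
noncomputable def ent {S A J : Type*} [Preorder J] (F : J → Finset S)
    (X : Set (S → A)) : ℝ :=
  Filter.limsup
    (fun j => Real.log (Nat.card ((fun (x : S → A) (t : F j) => x ↑t) '' X)) / (F j).card)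
    Filter.atTop

section aux
open Finset Filter
set_option linter.unusedSectionVars false

namespace EntTiling

variable {S A : Type*} [Semigroup S] [Fintype A] [DecidableEq S]







/-- restriction image -/
noncomputable def proj (X : Set (S → A)) (E : Finset S) : Set (E → A) :=
  (fun (x : S → A) (t : E) => x ↑t) '' X

lemma proj_split (X : Set (S → A)) (E D : Finset S) (hD : D ⊆ E) :
    Nat.card (proj X E) ≤ Nat.card (proj X (E \ D)) * Nat.card (proj X D) := by
  classical
  rw [← Nat.card_prod]
  have hED : ∀ u : {x // x ∈ E \ D}, (u : S) ∈ E := fun u => (mem_sdiff.mp u.2).1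
  refine Nat.card_le_card_of_injective
    (fun p => (⟨fun u : {x // x ∈ E \ D} => p.1 ⟨u, hED u⟩, ?_⟩, ⟨fun u : {x // x ∈ D} => p.1 ⟨u, hD u.2⟩, ?_⟩)) ?_
  · obtain ⟨x, hx, hxe⟩ := p.2
    exact ⟨x, hx, by funext u; rw [← hxe]⟩
  · obtain ⟨x, hx, hxe⟩ := p.2
    exact ⟨x, hx, by funext u; rw [← hxe]⟩
  · intro p q h
    obtain ⟨h1, h2⟩ := Prod.mk.injEq .. ▸ h
    apply Subtype.ext
    funext u
    by_cases hu : (u : S) ∈ D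
    · have := congrFun (congrArg Subtype.val h2) ⟨u, hu⟩
      simpa using this
    · have := congrFun (congrArg Subtype.val h1) ⟨(u : S), mem_sdiff.mpr ⟨u.2, hu⟩⟩
      simpa using this

lemma proj_card_le (X : Set (S → A)) (E : Finset S) :
    Nat.card (proj X E) ≤ Fintype.card A ^ E.card := by
  classical
  calc Nat.card (proj X E) ≤ Nat.card ({x // x ∈ E} → A) :=
        Nat.card_le_card_of_injective Subtype.val Subtype.val_injective
    _ = Fintype.card A ^ E.card := by
        rw [Nat.card_eq_fintype_card, Fintype.card_fun, Fintype.card_coe]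

lemma proj_card_lt (X : Set (S → A)) (D : Finset S) (h : proj X D ≠ Set.univ) :
    Nat.card (proj X D) + 1 ≤ Fintype.card A ^ D.card := by
  classical
  have : Nat.card (proj X D) < Fintype.card ({x // x ∈ D} → A) := by
    rw [Nat.card_eq_fintype_card, ← Set.toFinset_card]
    exact Finset.card_lt_card (by rwa [Set.toFinset_ssubset_univ, Set.ssubset_univ_iff])
  rw [Fintype.card_fun, Fintype.card_coe] at this
  omega



lemma count_main (hA : 2 ≤ Fintype.card A)
    (X : Set (S → A)) (K : Finset S) (T : Set S)
    (hT1 : ∀ t₁ ∈ T, ∀ t₂ ∈ T, t₁ ≠ t₂ →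
      Disjoint ((fun k : S => k * t₁) '' (K : Set S)) ((fun k : S => k * t₂) '' (K : Set S)))
    (hX : ∀ t ∈ T, proj X (K.image (fun k : S => k * t)) ≠ Set.univ)
    (𝒯 : Finset S) :
    ∀ E : Finset S, (∀ t ∈ 𝒯, t ∈ T) → (∀ t ∈ 𝒯, K.image (fun k : S => k * t) ⊆ E) →
    Nat.card (proj X E) * (Fintype.card A ^ K.card) ^ 𝒯.card ≤
      (Fintype.card A ^ K.card - 1) ^ 𝒯.card * Fintype.card A ^ E.card := by
  classical
  set a := Fintype.card A with ha
  induction 𝒯 using Finset.induction_on with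
  | empty => intro E _ _; simpa using proj_card_le X E
  | @insert t₀ 𝒯' ht₀ IH =>
      intro E hT hE
      set D : Finset S := K.image (fun k : S => k * t₀) with hD
      have hDE : D ⊆ E := hE t₀ (mem_insert_self _ _)
      have hm : D.card ≤ K.card := card_image_le
      have ht₀T : t₀ ∈ T := hT t₀ (mem_insert_self _ _)
      -- remaining tiles inside E \ D
      have hrem : ∀ t ∈ 𝒯', K.image (fun k : S => k * t) ⊆ E \ D := by
        intro t ht x hx
        rw [Finset.mem_sdiff]
        refine ⟨hE t (mem_insert_of_mem ht) hx, fun hxD => ?_⟩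
        have hdisj := hT1 t (hT t (mem_insert_of_mem ht)) t₀ ht₀T (by rintro rfl; exact ht₀ ht)
        have hx1 : x ∈ (fun k : S => k * t) '' (K : Set S) := by
          simpa [Set.image, Finset.mem_image] using (Finset.mem_image.mp hx).imp
            (fun k hk => ⟨hk.1, hk.2⟩)
        have hx2 : x ∈ (fun k : S => k * t₀) '' (K : Set S) := by
          simpa [Set.image, Finset.mem_image] using (Finset.mem_image.mp hxD).imp
            (fun k hk => ⟨hk.1, hk.2⟩)
        exact Set.disjoint_left.mp hdisj hx1 hx2
      have IH' := IH (E \ D) (fun t ht => hT t (mem_insert_of_mem ht)) hrem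
      have h1 := proj_split X E D hDE
      have h2 : Nat.card (proj X D) + 1 ≤ a ^ D.card := proj_card_lt X D (hX t₀ ht₀T)
      have hcard : (E \ D).card + D.card = E.card := card_sdiff_add_card_eq_card hDE
      have hapos : 1 ≤ a := by omega
      have hpowle : a ^ D.card ≤ a ^ K.card := Nat.pow_le_pow_right hapos hm
      -- key numeric inequality
      have hkey : (a ^ D.card - 1) * a ^ K.card ≤ (a ^ K.card - 1) * a ^ D.card := by
        have h1 : 1 ≤ a ^ D.card := Nat.one_le_pow _ _ (by omega)
        have h2 : 1 ≤ a ^ K.card := Nat.one_le_pow _ _ (by omega)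
        rw [Nat.sub_mul, Nat.sub_mul, one_mul, one_mul]
        rw [mul_comm]
        exact Nat.sub_le_sub_left hpowle _
      rw [card_insert_of_notMem ht₀]
      calc Nat.card (proj X E) * (a ^ K.card) ^ (𝒯'.card + 1)
          ≤ (Nat.card (proj X (E \ D)) * Nat.card (proj X D)) * (a ^ K.card) ^ (𝒯'.card + 1) :=
            Nat.mul_le_mul_right _ h1
        _ = (Nat.card (proj X (E \ D)) * (a ^ K.card) ^ 𝒯'.card) *
              (Nat.card (proj X D) * a ^ K.card) := by ring
        _ ≤ ((a ^ K.card - 1) ^ 𝒯'.card * a ^ (E \ D).card) *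
              ((a ^ D.card - 1) * a ^ K.card) :=
            Nat.mul_le_mul IH' (Nat.mul_le_mul_right _ (by omega))
        _ ≤ ((a ^ K.card - 1) ^ 𝒯'.card * a ^ (E \ D).card) *
              ((a ^ K.card - 1) * a ^ D.card) := Nat.mul_le_mul_left _ hkey
        _ = (a ^ K.card - 1) ^ (𝒯'.card + 1) * a ^ ((E \ D).card + D.card) := by
            rw [pow_succ, pow_add]; ring
        _ = (a ^ K.card - 1) ^ (𝒯'.card + 1) * a ^ E.card := by rw [hcard]

-- |{s ∈ E : k*s ∉ E}| ≤ |kE \ E|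
lemma filter_not_mem_le (hlc : ∀ s : S, Function.Injective (fun t : S => s * t))
    (E : Finset S) (k : S) :
    (E.filter (fun s => k * s ∉ E)).card ≤ ((E.image (fun t : S => k * t)) \ E).card := by
  apply card_le_card_of_injOn (fun s => k * s)
  · intro s hs
    rw [Finset.mem_coe, mem_filter] at hs
    exact mem_sdiff.mpr ⟨mem_image_of_mem _ hs.1, hs.2⟩
  · exact fun x _ y _ h => hlc k h

lemma sdiff_card_comm (hlc : ∀ s : S, Function.Injective (fun t : S => s * t))
    (E : Finset S) (k : S) :
    (E \ (E.image (fun t : S => k * t))).card = ((E.image (fun t : S => k * t)) \ E).card := by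
  have h1 := Finset.card_inter_add_card_sdiff E (E.image (fun t : S => k * t))
  have h2 := Finset.card_inter_add_card_sdiff (E.image (fun t : S => k * t)) E
  have h3 : (E.image (fun t : S => k * t)).card = E.card :=
    Finset.card_image_of_injective E (hlc k)
  rw [Finset.inter_comm] at h2
  omega

lemma exists_tiles (hlc : ∀ s : S, Function.Injective (fun t : S => s * t))
    (K : Finset S) (T : Set S)
    (hT2 : ∀ s : S, ∃ t ∈ T,
      (((fun k : S => k * s) '' (K : Set S)) ∩ ((fun k : S => k * t) '' (K : Set S))).Nonempty)
    (E : Finset S) :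
    ∃ 𝒯 : Finset S, (∀ t ∈ 𝒯, t ∈ T) ∧ (∀ t ∈ 𝒯, K.image (fun k : S => k * t) ⊆ E) ∧
      E.card ≤ K.card ^ 2 * 𝒯.card +
        (1 + 2 * K.card ^ 2) * (∑ k ∈ K, ((E.image (fun t : S => k * t)) \ E).card) := by
  classical
  -- choice of tiles and contact witnesses
  have hch : ∀ s : S, ∃ t, t ∈ T ∧ ∃ k, k ∈ K ∧ ∃ k', k' ∈ K ∧ k * s = k' * t := by
    intro s
    obtain ⟨t, htT, u, hu1, hu2⟩ := hT2 s
    obtain ⟨k, hk, hks⟩ := hu1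
    obtain ⟨k', hk', hkt⟩ := hu2
    exact ⟨t, htT, k, by simpa using hk, k', by simpa using hk', by simpa using hks.trans hkt.symm⟩
  choose τ hτT κ hκK κ' hκ'K hκeq using hch
  set β := ∑ k ∈ K, ((E.image (fun t : S => k * t)) \ E).card with hβ
  set B : Finset S :=
    E.filter (fun x => ∃ z : S, ∃ k ∈ K, ∃ k' ∈ K, k * z = x ∧ k' * z ∉ E) with hBdef
  -- bound on B
  have hBsub : B ⊆ (K ×ˢ K).biUnion (fun p =>
      ((E.filter (fun z => p.2 * z ∉ E)).image (fun z => p.1 * z)) ∪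
        (E \ E.image (fun t : S => p.1 * t))) := by
    intro x hx
    rw [hBdef, mem_filter] at hx
    obtain ⟨hxE, z, k, hk, k', hk', hkz, hk'z⟩ := hx
    rw [mem_biUnion]
    refine ⟨(k, k'), mem_product.mpr ⟨hk, hk'⟩, ?_⟩
    rw [mem_union]
    by_cases hz : z ∈ E
    · left
      exact mem_image.mpr ⟨z, mem_filter.mpr ⟨hz, hk'z⟩, hkz⟩
    · right
      rw [Finset.mem_sdiff]
      refine ⟨hxE, fun hmem => ?_⟩
      obtain ⟨w, hw, hwx⟩ := mem_image.mp hmem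
      exact hz (by rwa [← hlc k (hwx.trans hkz.symm)])
  have hBcard : B.card ≤ 2 * K.card * β := by
    calc B.card ≤ ∑ p ∈ K ×ˢ K, (((E.filter (fun z => p.2 * z ∉ E)).image (fun z => p.1 * z)) ∪
        (E \ E.image (fun t : S => p.1 * t))).card :=
          (card_le_card hBsub).trans (card_biUnion_le)
      _ ≤ ∑ p ∈ K ×ˢ K, (((E.image (fun t : S => p.2 * t)) \ E).card +
            ((E.image (fun t : S => p.1 * t)) \ E).card) := by
          apply sum_le_sum
          intro p _
          calc _ ≤ (((E.filter (fun z => p.2 * z ∉ E)).image (fun z => p.1 * z))).card +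
                (E \ E.image (fun t : S => p.1 * t)).card := card_union_le _ _
            _ ≤ _ := Nat.add_le_add ((card_image_le).trans (filter_not_mem_le hlc E p.2))
                (le_of_eq (sdiff_card_comm hlc E p.1))
      _ = 2 * K.card * β := by
          rw [sum_add_distrib]
          have e1 : ∑ p ∈ K ×ˢ K, ((E.image (fun t : S => p.2 * t)) \ E).card = K.card * β := by
            rw [Finset.sum_product]
            simp [← hβ]
          have e2 : ∑ p ∈ K ×ˢ K, ((E.image (fun t : S => p.1 * t)) \ E).card = K.card * β := by
            rw [Finset.sum_product]
            simp only [sum_const, smul_eq_mul, ← hβ]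
            rw [← Finset.mul_sum, ← hβ]
          rw [e1, e2]
          ring
  -- Good points
  set G : Finset S := E.filter (fun s => ∀ k ∈ K, k * s ∈ E ∧ k * s ∉ B) with hGdef
  have hbad : (E \ G).card ≤ β + K.card * B.card := by
    have hsub : E \ G ⊆ K.biUnion (fun k =>
        (E.filter (fun s => k * s ∉ E)) ∪ (E.filter (fun s => k * s ∈ B))) := by
      intro s hs
      rw [Finset.mem_sdiff, hGdef, mem_filter] at hs
      obtain ⟨hsE, hs2⟩ := hs
      push_neg at hs2
      obtain ⟨k, hk, hk2⟩ := hs2 hsE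
      rw [mem_biUnion]
      refine ⟨k, hk, mem_union.mpr ?_⟩
      by_cases hmem : k * s ∈ E
      · exact Or.inr (mem_filter.mpr ⟨hsE, hk2 hmem⟩)
      · exact Or.inl (mem_filter.mpr ⟨hsE, hmem⟩)
    calc (E \ G).card ≤ ∑ k ∈ K,
          ((E.filter (fun s => k * s ∉ E)) ∪ (E.filter (fun s => k * s ∈ B))).card :=
          (card_le_card hsub).trans card_biUnion_le
      _ ≤ ∑ k ∈ K, (((E.image (fun t : S => k * t)) \ E).card + B.card) := by
          apply sum_le_sum
          intro k _
          refine (card_union_le _ _).trans (Nat.add_le_add (filter_not_mem_le hlc E k) ?_)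
          apply card_le_card_of_injOn (fun s => k * s)
          · intro s hs; exact (mem_filter.mp hs).2
          · exact fun x _ y _ h => hlc k h
      _ = β + K.card * B.card := by rw [sum_add_distrib, ← hβ]; simp [mul_comm]
  -- tiles from good points are inside E
  have hGin : ∀ s ∈ G, K.image (fun k : S => k * τ s) ⊆ E := by
    intro s hs x hx
    obtain ⟨k'', hk'', rfl⟩ := mem_image.mp hx
    rw [hGdef, mem_filter] at hs
    obtain ⟨hu1, hu2⟩ := hs.2 (κ s) (hκK s)
    rw [hBdef, mem_filter] at hu2
    push_neg at hu2
    by_contra hnot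
    exact hnot (hu2 hu1 (τ s) (κ' s) (hκ'K s) k'' hk'' (hκeq s).symm)
  -- counting good points by tiles
  refine ⟨G.image τ, ?_, ?_, ?_⟩
  · intro t ht; obtain ⟨s, _, rfl⟩ := mem_image.mp ht; exact hτT s
  · intro t ht; obtain ⟨s, hs, rfl⟩ := mem_image.mp ht; exact hGin s hs
  · have hGcard : G.card ≤ K.card ^ 2 * (G.image τ).card := by
      rw [sq]
      apply card_le_mul_card_image
      intro t ht
      have : (G.filter (fun s => τ s = t)).card ≤ (K ×ˢ K).card := by
        apply card_le_card_of_injOn (fun s => (κ s, κ' s))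
        · intro s _; exact mem_product.mpr ⟨hκK s, hκ'K s⟩
        · intro s₁ h₁ s₂ h₂ hpair
          simp only [coe_filter, Set.mem_setOf_eq] at h₁ h₂
          have hκ12 : κ s₁ = κ s₂ := congrArg Prod.fst hpair
          have hκ'12 : κ' s₁ = κ' s₂ := congrArg Prod.snd hpair
          apply hlc (κ s₁)
          show κ s₁ * s₁ = κ s₁ * s₂
          rw [hκeq s₁, hκ12, hκ'12, h₁.2, ← h₂.2, ← hκeq s₂]
      rwa [card_product] at this
    have hEsplit : (E \ G).card + G.card = E.card :=
      card_sdiff_add_card_eq_card (filter_subset _ _)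
    have hBcard' : B.card ≤ 2 * K.card * β := hBcard
    calc E.card = G.card + (E \ G).card := by omega
      _ ≤ K.card ^ 2 * (G.image τ).card + (β + K.card * (2 * K.card * β)) := by
          have := hbad
          have h2 : K.card * B.card ≤ K.card * (2 * K.card * β) :=
            Nat.mul_le_mul_left _ hBcard'
          omega
      _ = K.card ^ 2 * (G.image τ).card + (1 + 2 * K.card ^ 2) * β := by ring

set_option maxHeartbeats 3200000 in
theorem entropy_lt_of_tiling_aux {S A J : Type*} [Semigroup S] [Fintype A] [DecidableEq S]
    [SemilatticeSup J] [Nonempty J]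
    (hlc : ∀ s : S, Function.Injective (fun t : S => s * t))
    (F : J → Finset S) (hFne : ∀ j, (F j).Nonempty)
    (hFol : ∀ s : S, Filter.Tendsto
      (fun j => ((((F j).image (fun t : S => s * t)) \ F j).card : ℝ) / (F j).card)
      Filter.atTop (nhds 0))
    (hA : 2 ≤ Fintype.card A)
    (X : Set (S → A)) (K : Finset S) (hK : K.Nonempty) (T : Set S)
    (hT1 : ∀ t₁ ∈ T, ∀ t₂ ∈ T, t₁ ≠ t₂ →
      Disjoint ((fun k : S => k * t₁) '' (K : Set S)) ((fun k : S => k * t₂) '' (K : Set S)))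
    (hT2 : ∀ s : S, ∃ t ∈ T,
      (((fun k : S => k * s) '' (K : Set S)) ∩ ((fun k : S => k * t) '' (K : Set S))).Nonempty)
    (hX : ∀ t ∈ T,
      (fun (x : S → A) (u : (K.image (fun k : S => k * t) : Finset S)) => x ↑u) '' X ≠
        Set.univ) :
    Filter.limsup
      (fun j => Real.log (Nat.card ((fun (x : S → A) (t : F j) => x ↑t) '' X)) / (F j).card)
      Filter.atTop < Real.log (Fintype.card A) := by
  classical
  have hX' : ∀ t ∈ T, proj X (K.image (fun k : S => k * t)) ≠ Set.univ := hX
  set a : ℕ := Fintype.card A with ha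
  set n : ℕ := K.card with hn
  have hnpos : 0 < n := card_pos.mpr hK
  set M : ℕ := a ^ n - 1 with hM
  have hA1 : 2 ≤ a ^ n := le_trans hA (Nat.le_self_pow (by omega) a)
  have hMpos : 1 ≤ M := by omega
  have hMlt : M < a ^ n := by omega
  set γ : ℝ := n * Real.log a - Real.log M with hγ
  have hγeq : Real.log ((a : ℕ) ^ n : ℕ) = n * Real.log a := by
    rw [Nat.cast_pow]
    exact Real.log_pow _ _
  have hγpos : 0 < γ := by
    rw [hγ, ← hγeq, sub_pos]
    exact Real.log_lt_log (by exact_mod_cast hMpos) (by exact_mod_cast hMlt)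
  have hγle : γ ≤ Real.log a := by
    have h2M : (a ^ n : ℕ) ≤ 2 * M := by omega
    have : Real.log (a ^ n : ℕ) ≤ Real.log 2 + Real.log M := by
      rw [← Real.log_mul (by norm_num) (by exact_mod_cast Nat.one_le_iff_ne_zero.mp hMpos)]
      apply Real.log_le_log (by positivity)
      exact_mod_cast h2M
    have h2a : Real.log 2 ≤ Real.log a := by
      apply Real.log_le_log (by norm_num)
      exact_mod_cast hA
    rw [hγ, ← hγeq]
    linarith
  set c : ℝ := γ / (2 * n ^ 2) with hc
  have hcpos : 0 < c := by
    apply div_pos hγpos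
    positivity
  have hcle : c ≤ Real.log a := by
    refine le_trans ?_ hγle
    rw [hc]
    apply div_le_self hγpos.le
    have : (1:ℝ) ≤ (n:ℝ)^2 := by
      have : (1:ℝ) ≤ (n:ℝ) := by exact_mod_cast hnpos
      nlinarith
    linarith
  set C : ℕ := 1 + 2 * n ^ 2 with hC
  have hCpos : (0:ℝ) < C := by positivity
  -- per-j bound under smallness condition
  have perj : ∀ j : J, ((C : ℝ) * (∑ k ∈ K, (((F j).image (fun t : S => k * t)) \ F j).card : ℕ)
        ≤ (F j).card / 2) →
      Real.log (Nat.card (proj X (F j))) / (F j).card ≤ Real.log a - c := by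
    intro j hsmall
    set E := F j with hE
    have hEpos : 0 < (E.card : ℝ) := by exact_mod_cast card_pos.mpr (hFne j)
    obtain ⟨𝒯, h𝒯T, h𝒯E, h𝒯c⟩ := exists_tiles hlc K T hT2 E
    set N := 𝒯.card with hN
    set βn : ℕ := ∑ k ∈ K, ((E.image (fun t : S => k * t)) \ E).card with hβn
    -- E.card ≤ 2 n² N (ℝ)
    have hEN : (E.card : ℝ) ≤ 2 * n ^ 2 * N := by
      have h1 : (E.card : ℝ) ≤ n ^ 2 * N + C * βn := by exact_mod_cast h𝒯c
      have := hsmall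
      nlinarith
    have hcnt := count_main hA X K T hT1 hX' 𝒯 E h𝒯T h𝒯E
    by_cases hP : Nat.card (proj X E) = 0
    · rw [hP]
      simp only [Nat.cast_zero, Real.log_zero, zero_div]
      linarith [hcle]
    · have hPpos : 1 ≤ Nat.card (proj X E) := Nat.one_le_iff_ne_zero.mpr hP
      set P := Nat.card (proj X E) with hPd
      have hreal : (P : ℝ) * ((a:ℝ) ^ n) ^ N ≤ (M : ℝ) ^ N * (a:ℝ) ^ E.card := by
        have : (P * (a ^ n) ^ N : ℕ) ≤ ((M : ℕ) ^ N * a ^ E.card : ℕ) := hcnt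
        exact_mod_cast this
      have hPr : (0:ℝ) < P := by exact_mod_cast hPpos
      have hpow1 : (0:ℝ) < ((a:ℝ) ^ n) ^ N := by positivity
      have hlog := Real.log_le_log (by positivity) hreal
      rw [Real.log_mul (ne_of_gt hPr) (ne_of_gt hpow1), Real.log_mul (by positivity)
        (by positivity), Real.log_pow, Real.log_pow, Real.log_pow] at hlog
      -- hlog : log P + N*(n*log a) ≤ N*log M + E.card*log a
      rw [div_le_iff₀ hEpos]
      have h2n : (0:ℝ) < 2 * (n:ℝ) ^ 2 := by positivity
      have hst : (E.card : ℝ) * c ≤ (N:ℝ) * ((n:ℝ) * Real.log a - Real.log M) := by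
        have : (E.card : ℝ) * c ≤ (N:ℝ) * γ := by
          rw [hc, mul_div_assoc', div_le_iff₀ h2n]
          nlinarith [mul_le_mul_of_nonneg_right hEN hγpos.le]
        rwa [hγ] at this
      have hEpow : Real.log ((a:ℝ) ^ (E.card : ℕ)) = (E.card : ℝ) * Real.log a :=
        Real.log_pow _ _
      linarith [hlog, hst, hEpow]
  -- eventual smallness
  have hsum : Tendsto (fun j => ∑ k ∈ K,
      ((((F j).image (fun t : S => k * t)) \ F j).card : ℝ) / (F j).card) atTop (nhds 0) := by
    have h0 := tendsto_finset_sum K (fun k (_ : k ∈ K) => hFol k)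
    rw [Finset.sum_const_zero] at h0
    exact h0
  have hev : ∀ᶠ j in atTop, ∑ k ∈ K,
      ((((F j).image (fun t : S => k * t)) \ F j).card : ℝ) / (F j).card < 1 / (2 * C) := by
    exact hsum.eventually_lt_const (div_pos one_pos (by linarith [hCpos]))
  have hev2 : ∀ᶠ j in atTop,
      Real.log (Nat.card (proj X (F j))) / (F j).card ≤ Real.log a - c := by
    filter_upwards [hev] with j hj
    apply perj
    have hFpos : 0 < ((F j).card : ℝ) := by exact_mod_cast card_pos.mpr (hFne j)
    have heq : ∑ k ∈ K, ((((F j).image (fun t : S => k * t)) \ F j).card : ℝ) / (F j).card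
        = ((∑ k ∈ K, (((F j).image (fun t : S => k * t)) \ F j).card : ℕ) : ℝ) / (F j).card := by
      rw [Nat.cast_sum, Finset.sum_div]
    rw [heq] at hj
    rw [div_lt_iff₀ hFpos] at hj
    have : (C:ℝ) * ((∑ k ∈ K, (((F j).image (fun t : S => k * t)) \ F j).card : ℕ) : ℝ)
        < (C:ℝ) * (1 / (2 * C) * (F j).card) := by
      apply mul_lt_mul_of_pos_left hj hCpos
    have hCne : (C:ℝ) ≠ 0 := ne_of_gt hCpos
    have h2C : (C:ℝ) * (1 / (2 * (C:ℝ))) = 1 / 2 := by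
      rw [mul_one_div]
      rw [div_eq_div_iff (ne_of_gt (by linarith [hCpos])) (by norm_num : (2:ℝ) ≠ 0)]
      ring
    have hcc : (C:ℝ) * (1 / (2 * (C:ℝ)) * ((F j).card : ℝ)) = ((F j).card : ℝ) / 2 := by
      rw [← mul_assoc, h2C]
      ring
    linarith [this, hcc.le, hcc.ge]
  -- conclude
  have hnonneg : ∀ j, (0:ℝ) ≤
      Real.log (Nat.card ((fun (x : S → A) (t : F j) => x ↑t) '' X)) / (F j).card :=
    fun j => div_nonneg (Real.log_natCast_nonneg _) (Nat.cast_nonneg _)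
  have hcb : Filter.IsCoboundedUnder (· ≤ ·)
      (atTop : Filter J) (fun j =>
        Real.log (Nat.card ((fun (x : S → A) (t : F j) => x ↑t) '' X)) / (F j).card) :=
    Filter.isCoboundedUnder_le_of_eventually_le atTop
      (Eventually.of_forall hnonneg)
  have hls : Filter.limsup
      (fun j => Real.log (Nat.card ((fun (x : S → A) (t : F j) => x ↑t) '' X)) / (F j).card)
      Filter.atTop ≤ Real.log a - c := by
    apply Filter.limsup_le_of_le hcb
    exact hev2
  exact lt_of_le_of_lt hls (by linarith)


end EntTiling
end aux

/-- If `X ⊆ A^S` (with `|A| ≥ 2`) misses a pattern on every tile `Kt` of a `K`-tiling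
`T`, then `ent F X < log |A|`. -/
theorem entropy_lt_of_tiling {S A J : Type*} [Semigroup S] [Fintype A] [DecidableEq S]
    [SemilatticeSup J] [Nonempty J]
    (hlc : ∀ s : S, Function.Injective (fun t : S => s * t))
    (F : J → Finset S) (hFne : ∀ j, (F j).Nonempty)
    (hFol : ∀ s : S, Filter.Tendsto
      (fun j => ((((F j).image (fun t : S => s * t)) \ F j).card : ℝ) / (F j).card)
      Filter.atTop (nhds 0))
    (hA : 2 ≤ Fintype.card A)
    (X : Set (S → A)) (K : Finset S) (hK : K.Nonempty) (T : Set S)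
    (hT1 : ∀ t₁ ∈ T, ∀ t₂ ∈ T, t₁ ≠ t₂ →
      Disjoint ((fun k : S => k * t₁) '' (K : Set S)) ((fun k : S => k * t₂) '' (K : Set S)))
    (hT2 : ∀ s : S, ∃ t ∈ T,
      (((fun k : S => k * s) '' (K : Set S)) ∩ ((fun k : S => k * t) '' (K : Set S))).Nonempty)
    (hX : ∀ t ∈ T,
      (fun (x : S → A) (u : (K.image (fun k : S => k * t) : Finset S)) => x ↑u) '' X ≠
        Set.univ) :
    ent F X < Real.log (Fintype.card A) := by
  unfold ent
  exact EntTiling.entropy_lt_of_tiling_aux hlc F hFne hFol hA X K hK T hT1 hT2 hX
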